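/- m(14) = 17: the minimum number of edges of a pancyclic graph on 14 vertices is 17. -/

import Mathlib

open SimpleGraph Finset
open scoped symmDiff

/-- `G` has a cycle of length `k`. -/
def HasCycleLength {V : Type*} (G : SimpleGraph V) (k : ℕ) : Prop :=
  ∃ (v : V) (w : G.Walk v v), w.IsCycle ∧ w.length = k

/-- A graph on a finite vertex type is pancyclic if it has a cycle of every
length `k` with `3 ≤ k ≤ n`, where `n` is the number of vertices. -/
def Pancyclic {V : Type*} [Fintype V] (G : SimpleGraph V) : Prop :=
  ∀ k : ℕ, 3 ≤ k → k ≤ Fintype.card V → HasCycleLength G k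

/-- `m n` is the minimum number of edges of a pancyclic graph on `n` vertices. -/
noncomputable def m (n : ℕ) : ℕ :=
  sInf {e | ∃ G : SimpleGraph (Fin n), Pancyclic G ∧ G.edgeSet.ncard = e}


variable {V : Type*} [DecidableEq V] {G : SimpleGraph V}

lemma card_filter_toFinset (l : List (Sym2 V)) (hl : l.Nodup) (p : Sym2 V → Prop)
    [DecidablePred p] :
    ((l.toFinset.filter p).card) = l.countP (fun e => decide (p e)) := by
  rw [List.countP_eq_length_filter, ← List.toFinset_card_of_nodup (hl.filter _),
    List.toFinset_filter]
  congr 1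
  ext e
  simp

lemma countP_edges_path {a b : V} (p : G.Walk a b) (hp : p.IsPath) (x : V) :
    p.edges.countP (fun e => x ∈ e) =
      if x = a then (if p.Nil then 0 else 1)
      else if x = b then 1
      else if x ∈ p.support then 2 else 0 := by
  induction p with
  | nil =>
    simp only [Walk.edges_nil, List.countP_nil, Walk.nil_nil, Walk.support_nil,
      List.mem_singleton]
    split_ifs <;> simp_all
  | @cons a c b h q ih =>
    rw [Walk.cons_isPath_iff] at hp
    obtain ⟨hq, hanot⟩ := hp
    have hca : c ∈ q.support := q.start_mem_support
    have hba : b ∈ q.support := q.end_mem_support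
    have hac : a ≠ c := h.ne
    have hnilb : q.Nil ↔ c = b := by
      constructor
      · intro hn; exact hn.eq
      · rintro rfl; rw [Walk.isPath_iff_eq_nil] at hq; subst hq; exact Walk.nil_nil
    rw [Walk.edges_cons, List.countP_cons, ih hq]
    by_cases hxa : x = a
    · subst hxa
      have h1 : x ∉ q.support := hanot
      have hxc : x ≠ c := fun e => hanot (e ▸ hca)
      have hxb : x ≠ b := fun e => hanot (e ▸ hba)
      simp [hxc, hxb, h1, Sym2.mem_iff, hac]
    · by_cases hxc : x = c
      · subst hxc
        by_cases hn : q.Nil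
        · have hcb : x = b := hnilb.mp hn
          simp [hxa, hn, hcb, Sym2.mem_iff]
        · have hcb : x ≠ b := fun e => hn (hnilb.mpr e)
          simp [hxa, hcb, hn, Sym2.mem_iff, Walk.support_cons, hca]
      · have hmem : x ∈ s(a, c) ↔ False := by simp [Sym2.mem_iff, hxa, hxc]
        simp [hmem, hxa, hxc, Walk.support_cons]

lemma countP_edges_cycle {v : V} {w : G.Walk v v} (hw : w.IsCycle) (x : V) :
    w.edges.countP (fun e => x ∈ e) = if x ∈ w.support then 2 else 0 := by
  cases w with
  | nil => exact absurd rfl hw.ne_nil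
  | @cons _ c _ h q =>
    rw [Walk.cons_isCycle_iff] at hw
    obtain ⟨hq, -⟩ := hw
    rw [Walk.edges_cons, List.countP_cons, countP_edges_path q hq]
    have hcv : c ≠ v := h.ne'
    have hnil : ¬ q.Nil := Walk.not_nil_of_ne hcv
    have hcs : c ∈ q.support := q.start_mem_support
    by_cases hxv : x = v
    · subst hxv
      simp [Sym2.mem_iff, hcv.symm, hnil, Walk.support_cons]
    · by_cases hxc : x = c
      · subst hxc
        simp [Sym2.mem_iff, hxv, hnil, Walk.support_cons, hcs]
      · have hmem : x ∈ s(v, c) ↔ False := by simp [Sym2.mem_iff, hxv, hxc]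
        simp [hmem, hxc, hxv, Walk.support_cons]

lemma walk_prop {P : V → Prop} {a b : V} (p : G.Walk a b)
    (hedge : ∀ x y : V, s(x, y) ∈ p.edges → P x → P y) (ha : P a) :
    ∀ x ∈ p.support, P x := by
  induction p with
  | nil =>
    intro x hx
    rw [Walk.mem_support_nil_iff] at hx
    subst hx; exact ha
  | @cons a c b h q ih =>
    intro x hx
    rw [Walk.support_cons, List.mem_cons] at hx
    have hPc : P c := hedge a c (by simp) ha
    rcases hx with rfl | hx
    · exact ha
    · exact ih (fun x y hxy hx => hedge x y (by simp [hxy]) hx) hPc x hx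

lemma mem_support_of_mem_edges' {a b : V} (p : G.Walk a b) {e : Sym2 V} {x : V}
    (he : e ∈ p.edges) (hx : x ∈ e) : x ∈ p.support := by
  induction e with
  | _ y z =>
    rw [Sym2.mem_iff] at hx
    rcases hx with rfl | rfl
    · exact p.fst_mem_support_of_mem_edges he
    · exact p.snd_mem_support_of_mem_edges he

lemma even_subset_eq_cycle_edges {v : V} {w : G.Walk v v} (hw : w.IsCycle)
    {T : Finset (Sym2 V)} (hT : T ⊆ w.edges.toFinset)
    (heven : ∀ x : V, Even ((T.filter (fun e => x ∈ e)).card))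
    (hne : T.Nonempty) : T = w.edges.toFinset := by
  have hnodup : w.edges.Nodup := hw.isTrail.edges_nodup
  have hH2 : ∀ x ∈ w.support, ((w.edges.toFinset.filter (fun e => x ∈ e)).card) = 2 := by
    intro x hx
    rw [card_filter_toFinset _ hnodup]
    have := countP_edges_cycle hw x
    simp only [hx, if_true] at this
    exact this
  have hTsub : ∀ x : V, T.filter (fun e => x ∈ e) ⊆ w.edges.toFinset.filter (fun e => x ∈ e) :=
    fun x => Finset.filter_subset_filter _ hT
  have key : ∀ x ∈ w.support, (T.filter (fun e => x ∈ e)).Nonempty →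
      w.edges.toFinset.filter (fun e => x ∈ e) ⊆ T := by
    intro x hx hne'
    have h1 : 1 ≤ (T.filter (fun e => x ∈ e)).card := Finset.card_pos.mpr hne'
    obtain ⟨k, hk⟩ := heven x
    have h2 : (w.edges.toFinset.filter (fun e => x ∈ e)).card ≤
        (T.filter (fun e => x ∈ e)).card := by
      rw [hH2 x hx]; omega
    have heq := Finset.eq_of_subset_of_card_le (hTsub x) h2
    rw [← heq]
    exact Finset.filter_subset _ _
  have hPmem : ∀ (x : V) (e : Sym2 V), e ∈ T → x ∈ e →
      w.edges.toFinset.filter (fun e => x ∈ e) ⊆ T := by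
    intro x e heT hxe
    have hxsup : x ∈ w.support :=
      mem_support_of_mem_edges' w (List.mem_toFinset.mp (hT heT)) hxe
    exact key x hxsup ⟨e, Finset.mem_filter.mpr ⟨heT, hxe⟩⟩
  have hprop : ∀ x y : V, s(x, y) ∈ w.edges →
      (w.edges.toFinset.filter (fun e => x ∈ e) ⊆ T) →
      (w.edges.toFinset.filter (fun e => y ∈ e) ⊆ T) := by
    intro x y hxy hPx
    have hxyT : s(x, y) ∈ T :=
      hPx (Finset.mem_filter.mpr ⟨List.mem_toFinset.mpr hxy, by simp⟩)
    exact hPmem y _ hxyT (by simp)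
  obtain ⟨e0, he0⟩ := hne
  obtain ⟨x0, hx0e⟩ : ∃ x0 : V, x0 ∈ e0 := by
    induction e0 with
    | _ y z => exact ⟨y, by simp⟩
  have hx0 : x0 ∈ w.support :=
    mem_support_of_mem_edges' w (List.mem_toFinset.mp (hT he0)) hx0e
  have hPx0 : w.edges.toFinset.filter (fun e => x0 ∈ e) ⊆ T := hPmem x0 e0 he0 hx0e
  have hperm : List.Perm ((w.rotate x0 hx0).edges) w.edges := (w.rotate_edges x0 hx0).perm
  have hall := walk_prop (P := fun x => w.edges.toFinset.filter (fun e => x ∈ e) ⊆ T)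
    (w.rotate x0 hx0) (fun x y hxy hPx => hprop x y (hperm.subset hxy) hPx) hPx0
  apply Finset.Subset.antisymm hT
  intro f hf
  have hfw' : f ∈ (w.rotate x0 hx0).edges := hperm.mem_iff.mpr (List.mem_toFinset.mp hf)
  obtain ⟨y0, hy0⟩ : ∃ y0 : V, y0 ∈ f ∧ y0 ∈ (w.rotate x0 hx0).support := by
    induction f with
    | _ y z =>
      exact ⟨y, by simp, (w.rotate x0 hx0).fst_mem_support_of_mem_edges hfw'⟩
  exact hall y0 hy0.2 (Finset.mem_filter.mpr ⟨hf, hy0.1⟩)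

lemma card_symmDiff_finset {α : Type*} [DecidableEq α] (X Y : Finset α) :
    (X ∆ Y).card + 2 * (X ∩ Y).card = X.card + Y.card := by
  have h1 := Finset.card_sdiff_add_card_inter X Y
  have h2 := Finset.card_sdiff_add_card_inter Y X
  have hd : Disjoint (X \ Y) (Y \ X) := disjoint_sdiff_sdiff
  have h3 : (X ∆ Y) = (X \ Y) ∪ (Y \ X) := by
    rw [symmDiff_def]; rfl
  rw [Finset.inter_comm] at h2
  rw [h3, Finset.card_union_of_disjoint hd]
  omega

lemma even_filter_symmDiff {α : Type*} [DecidableEq α] (p : α → Prop) [DecidablePred p]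
    (A B : Finset α) (hA : Even ((A.filter p).card)) (hB : Even ((B.filter p).card)) :
    Even (((A ∆ B).filter p).card) := by
  have h1 : (A ∆ B).filter p = (A.filter p) ∆ (B.filter p) := by
    ext x
    simp only [Finset.mem_filter, Finset.mem_symmDiff]
    tauto
  have h2 := card_symmDiff_finset (A.filter p) (B.filter p)
  rw [h1, Nat.even_iff]
  rw [Nat.even_iff] at hA hB
  omega

lemma cycle_finset_data {v : V} {w : G.Walk v v} (hw : w.IsCycle) :
    w.edges.toFinset.card = w.length ∧
      (∀ x : V, Even ((w.edges.toFinset.filter (fun e => x ∈ e)).card)) ∧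
      ↑(w.edges.toFinset) ⊆ G.edgeSet := by
  refine ⟨?_, ?_, ?_⟩
  · rw [List.toFinset_card_of_nodup hw.isTrail.edges_nodup, Walk.length_edges]
  · intro x
    rw [card_filter_toFinset _ hw.isTrail.edges_nodup]
    exact (hw.isTrail.even_countP_edges_iff x).mpr (fun h => absurd rfl h)
  · intro e he
    exact Walk.edges_subset_edgeSet w (List.mem_toFinset.mp (by exact_mod_cast he))

lemma lower_bound (G : SimpleGraph (Fin 14)) (hG : Pancyclic G) : 17 ≤ G.edgeSet.ncard := by
  classical
  by_contra hlt
  push_neg at hlt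
  have hfin : G.edgeSet.Finite := Set.toFinite _
  have hEcard : hfin.toFinset.card ≤ 16 := by
    rw [← Set.ncard_eq_toFinset_card _ hfin]; omega
  set E := hfin.toFinset with hE
  -- Hamiltonian cycle
  obtain ⟨v, w, hw, hlen⟩ := hG 14 (by norm_num) (by simp)
  obtain ⟨hHcard, hHeven, hHsub⟩ := cycle_finset_data hw
  set H := w.edges.toFinset with hHdef
  have hHcard14 : H.card = 14 := by rw [hHcard, hlen]
  have hHE : H ⊆ E := by
    intro e he
    exact hfin.mem_toFinset.mpr (hHsub (by exact_mod_cast he))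
  have hDcard : (E \ H).card ≤ 2 := by
    rw [Finset.card_sdiff_of_subset hHE]
    omega
  -- cycles of lengths 3..13
  have hdata : ∀ k ∈ Finset.Icc 3 13, ∃ S : Finset (Sym2 (Fin 14)),
      S ⊆ E ∧ S.card = k ∧ ∀ x, Even ((S.filter (fun e => x ∈ e)).card) := by
    intro k hk
    rw [Finset.mem_Icc] at hk
    obtain ⟨v', w', hw', hlen'⟩ := hG k hk.1 (by rw [Fintype.card_fin]; omega)
    obtain ⟨hc, hev, hsub⟩ := cycle_finset_data hw'
    refine ⟨w'.edges.toFinset, ?_, by rw [hc, hlen'], hev⟩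
    intro e he
    exact hfin.mem_toFinset.mpr (hsub (by exact_mod_cast he))
  choose! S hSE hScard hSeven using hdata
  -- pigeonhole on chord sets
  have hmaps : ∀ k ∈ Finset.Icc 3 13, S k \ H ∈ (E \ H).powerset := by
    intro k hk
    rw [Finset.mem_powerset]
    exact Finset.sdiff_subset_sdiff (hSE k hk) (le_refl H)
  have hpow : ((E \ H).powerset.card) * 2 < (Finset.Icc 3 13).card := by
    rw [Finset.card_powerset, Nat.card_Icc]
    have : 2 ^ (E \ H).card ≤ 4 := by
      calc 2 ^ (E \ H).card ≤ 2 ^ 2 := Nat.pow_le_pow_right (by norm_num) hDcard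
      _ = 4 := by norm_num
    omega
  obtain ⟨y, -, hy2⟩ := Finset.exists_lt_card_fiber_of_mul_lt_card_of_maps_to hmaps hpow
  rw [Finset.two_lt_card_iff] at hy2
  obtain ⟨a, b, c, ha, hb, hc, hab, hac, hbc⟩ := hy2
  rw [Finset.mem_filter] at ha hb hc
  -- key: for two cycles with same chord set, symmDiff is H
  have key : ∀ p q : ℕ, p ∈ Finset.Icc 3 13 → q ∈ Finset.Icc 3 13 → p ≠ q →
      S p \ H = y → S q \ H = y → S p ∆ S q = H := by
    intro p q hp hq hpq hyp hyq
    apply even_subset_eq_cycle_edges hw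
    · intro e he
      rw [Finset.mem_symmDiff] at he
      by_contra heH
      rcases he with ⟨h1, h2⟩ | ⟨h1, h2⟩
      · have hmem : e ∈ S q \ H := by rw [hyq, ← hyp]; exact Finset.mem_sdiff.mpr ⟨h1, heH⟩
        exact h2 (Finset.mem_sdiff.mp hmem).1
      · have hmem : e ∈ S p \ H := by rw [hyp, ← hyq]; exact Finset.mem_sdiff.mpr ⟨h1, heH⟩
        exact h2 (Finset.mem_sdiff.mp hmem).1
    · intro x
      exact even_filter_symmDiff _ _ _ (hSeven p hp x) (hSeven q hq x)
    · rw [Finset.symmDiff_nonempty]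
      intro hEq
      apply hpq
      rw [← hScard p hp, ← hScard q hq, hEq]
  have h1 : S a ∆ S b = H := key a b ha.1 hb.1 hab ha.2 hb.2
  have h2 : S a ∆ S c = H := key a c ha.1 hc.1 hac ha.2 hc.2
  have : S b = S c := symmDiff_right_injective (S a) (h1.trans h2.symm)
  apply hbc
  rw [← hScard b hb.1, ← hScard c hc.1, this]

def E0 : Finset (Sym2 (Fin 14)) := {s(0, 1), s(1, 2), s(2, 3), s(3, 4), s(4, 5), s(5, 6), s(6, 7), s(7, 8), s(8, 9), s(9, 10), s(10, 11), s(11, 12), s(12, 13), s(13, 0), s(0, 12), s(2, 13), s(8, 13)}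

def G0 : SimpleGraph (Fin 14) where
  Adj v w := s(v, w) ∈ E0 ∧ v ≠ w
  symm := by
    constructor; intro v w h
    exact ⟨by rw [Sym2.eq_swap]; exact h.1, h.2.symm⟩
  loopless := ⟨fun v h => h.2 rfl⟩

instance : DecidableRel G0.Adj :=
  fun v w => inferInstanceAs (Decidable (s(v, w) ∈ E0 ∧ v ≠ w))

lemma edgeSet_G0 : G0.edgeSet = ↑E0 := by
  have hnd : ∀ v w : Fin 14, s(v, w) ∈ E0 → v ≠ w := by decide
  ext e
  induction e with
  | _ v w =>
    rw [SimpleGraph.mem_edgeSet, Finset.mem_coe]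
    exact ⟨fun h => h.1, fun h => ⟨h, hnd v w h⟩⟩

lemma ncard_G0 : G0.edgeSet.ncard = 17 := by
  rw [edgeSet_G0, Set.ncard_coe_finset]
  decide

lemma isCycle_of {u : Fin 14} (w : G0.Walk u u) (h1 : w.edges.Nodup)
    (h2 : ¬ w.Nil) (h3 : w.support.tail.Nodup) : w.IsCycle :=
  ⟨⟨⟨h1⟩, fun heq => h2 (Walk.nil_iff_eq_nil.mpr heq)⟩, h3⟩
def w3 : G0.Walk 0 0 := Walk.cons (by decide : G0.Adj 0 12) (Walk.cons (by decide : G0.Adj 12 13) (Walk.cons (by decide : G0.Adj 13 0) (Walk.nil)))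
def w4 : G0.Walk 13 13 := Walk.cons (by decide : G0.Adj 13 0) (Walk.cons (by decide : G0.Adj 0 1) (Walk.cons (by decide : G0.Adj 1 2) (Walk.cons (by decide : G0.Adj 2 13) (Walk.nil))))
def w5 : G0.Walk 0 0 := Walk.cons (by decide : G0.Adj 0 1) (Walk.cons (by decide : G0.Adj 1 2) (Walk.cons (by decide : G0.Adj 2 13) (Walk.cons (by decide : G0.Adj 13 12) (Walk.cons (by decide : G0.Adj 12 0) (Walk.nil)))))
def w6 : G0.Walk 8 8 := Walk.cons (by decide : G0.Adj 8 9) (Walk.cons (by decide : G0.Adj 9 10) (Walk.cons (by decide : G0.Adj 10 11) (Walk.cons (by decide : G0.Adj 11 12) (Walk.cons (by decide : G0.Adj 12 13) (Walk.cons (by decide : G0.Adj 13 8) (Walk.nil))))))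
def w7 : G0.Walk 13 13 := Walk.cons (by decide : G0.Adj 13 0) (Walk.cons (by decide : G0.Adj 0 12) (Walk.cons (by decide : G0.Adj 12 11) (Walk.cons (by decide : G0.Adj 11 10) (Walk.cons (by decide : G0.Adj 10 9) (Walk.cons (by decide : G0.Adj 9 8) (Walk.cons (by decide : G0.Adj 8 13) (Walk.nil)))))))
def w8 : G0.Walk 2 2 := Walk.cons (by decide : G0.Adj 2 3) (Walk.cons (by decide : G0.Adj 3 4) (Walk.cons (by decide : G0.Adj 4 5) (Walk.cons (by decide : G0.Adj 5 6) (Walk.cons (by decide : G0.Adj 6 7) (Walk.cons (by decide : G0.Adj 7 8) (Walk.cons (by decide : G0.Adj 8 13) (Walk.cons (by decide : G0.Adj 13 2) (Walk.nil))))))))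
def w9 : G0.Walk 2 2 := Walk.cons (by decide : G0.Adj 2 13) (Walk.cons (by decide : G0.Adj 13 8) (Walk.cons (by decide : G0.Adj 8 9) (Walk.cons (by decide : G0.Adj 9 10) (Walk.cons (by decide : G0.Adj 10 11) (Walk.cons (by decide : G0.Adj 11 12) (Walk.cons (by decide : G0.Adj 12 0) (Walk.cons (by decide : G0.Adj 0 1) (Walk.cons (by decide : G0.Adj 1 2) (Walk.nil)))))))))
def w10 : G0.Walk 13 13 := Walk.cons (by decide : G0.Adj 13 0) (Walk.cons (by decide : G0.Adj 0 1) (Walk.cons (by decide : G0.Adj 1 2) (Walk.cons (by decide : G0.Adj 2 3) (Walk.cons (by decide : G0.Adj 3 4) (Walk.cons (by decide : G0.Adj 4 5) (Walk.cons (by decide : G0.Adj 5 6) (Walk.cons (by decide : G0.Adj 6 7) (Walk.cons (by decide : G0.Adj 7 8) (Walk.cons (by decide : G0.Adj 8 13) (Walk.nil))))))))))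
def w11 : G0.Walk 0 0 := Walk.cons (by decide : G0.Adj 0 1) (Walk.cons (by decide : G0.Adj 1 2) (Walk.cons (by decide : G0.Adj 2 3) (Walk.cons (by decide : G0.Adj 3 4) (Walk.cons (by decide : G0.Adj 4 5) (Walk.cons (by decide : G0.Adj 5 6) (Walk.cons (by decide : G0.Adj 6 7) (Walk.cons (by decide : G0.Adj 7 8) (Walk.cons (by decide : G0.Adj 8 13) (Walk.cons (by decide : G0.Adj 13 12) (Walk.cons (by decide : G0.Adj 12 0) (Walk.nil)))))))))))
def w12 : G0.Walk 2 2 := Walk.cons (by decide : G0.Adj 2 3) (Walk.cons (by decide : G0.Adj 3 4) (Walk.cons (by decide : G0.Adj 4 5) (Walk.cons (by decide : G0.Adj 5 6) (Walk.cons (by decide : G0.Adj 6 7) (Walk.cons (by decide : G0.Adj 7 8) (Walk.cons (by decide : G0.Adj 8 9) (Walk.cons (by decide : G0.Adj 9 10) (Walk.cons (by decide : G0.Adj 10 11) (Walk.cons (by decide : G0.Adj 11 12) (Walk.cons (by decide : G0.Adj 12 13) (Walk.cons (by decide : G0.Adj 13 2) (Walk.nil))))))))))))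
def w13 : G0.Walk 0 0 := Walk.cons (by decide : G0.Adj 0 1) (Walk.cons (by decide : G0.Adj 1 2) (Walk.cons (by decide : G0.Adj 2 3) (Walk.cons (by decide : G0.Adj 3 4) (Walk.cons (by decide : G0.Adj 4 5) (Walk.cons (by decide : G0.Adj 5 6) (Walk.cons (by decide : G0.Adj 6 7) (Walk.cons (by decide : G0.Adj 7 8) (Walk.cons (by decide : G0.Adj 8 9) (Walk.cons (by decide : G0.Adj 9 10) (Walk.cons (by decide : G0.Adj 10 11) (Walk.cons (by decide : G0.Adj 11 12) (Walk.cons (by decide : G0.Adj 12 0) (Walk.nil)))))))))))))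
def w14 : G0.Walk 0 0 := Walk.cons (by decide : G0.Adj 0 1) (Walk.cons (by decide : G0.Adj 1 2) (Walk.cons (by decide : G0.Adj 2 3) (Walk.cons (by decide : G0.Adj 3 4) (Walk.cons (by decide : G0.Adj 4 5) (Walk.cons (by decide : G0.Adj 5 6) (Walk.cons (by decide : G0.Adj 6 7) (Walk.cons (by decide : G0.Adj 7 8) (Walk.cons (by decide : G0.Adj 8 9) (Walk.cons (by decide : G0.Adj 9 10) (Walk.cons (by decide : G0.Adj 10 11) (Walk.cons (by decide : G0.Adj 11 12) (Walk.cons (by decide : G0.Adj 12 13) (Walk.cons (by decide : G0.Adj 13 0) (Walk.nil))))))))))))))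

lemma pan_G0 : Pancyclic G0 := by
  intro k hk3 hk14
  rw [Fintype.card_fin] at hk14
  interval_cases k
  · exact ⟨0, w3, isCycle_of _ (by decide) Walk.not_nil_cons (by decide), rfl⟩
  · exact ⟨13, w4, isCycle_of _ (by decide) Walk.not_nil_cons (by decide), rfl⟩
  · exact ⟨0, w5, isCycle_of _ (by decide) Walk.not_nil_cons (by decide), rfl⟩
  · exact ⟨8, w6, isCycle_of _ (by decide) Walk.not_nil_cons (by decide), rfl⟩
  · exact ⟨13, w7, isCycle_of _ (by decide) Walk.not_nil_cons (by decide), rfl⟩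
  · exact ⟨2, w8, isCycle_of _ (by decide) Walk.not_nil_cons (by decide), rfl⟩
  · exact ⟨2, w9, isCycle_of _ (by decide) Walk.not_nil_cons (by decide), rfl⟩
  · exact ⟨13, w10, isCycle_of _ (by decide) Walk.not_nil_cons (by decide), rfl⟩
  · exact ⟨0, w11, isCycle_of _ (by decide) Walk.not_nil_cons (by decide), rfl⟩
  · exact ⟨2, w12, isCycle_of _ (by decide) Walk.not_nil_cons (by decide), rfl⟩
  · exact ⟨0, w13, isCycle_of _ (by decide) Walk.not_nil_cons (by decide), rfl⟩
  · exact ⟨0, w14, isCycle_of _ (by decide) Walk.not_nil_cons (by decide), rfl⟩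

/-- The minimum number of edges of a pancyclic graph on 14 vertices is 17. -/
theorem stmt_14 : m 14 = 17 := by
  have hmem : 17 ∈ {e | ∃ G : SimpleGraph (Fin 14), Pancyclic G ∧ G.edgeSet.ncard = e} :=
    ⟨G0, pan_G0, ncard_G0⟩
  refine le_antisymm (Nat.sInf_le hmem) (le_csInf ⟨17, hmem⟩ ?_)
  rintro e ⟨G, hG, rfl⟩
  exact lower_bound G hG
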